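/- arXiv:2602.21414 — 5 statements merged into one kernel-verified Lean document; each statement's English description precedes it below -/
import Mathlib

section
/- Let d_v, α, β, γ, a > 0 with α < γ. Suppose u, v : [0,∞) × [0,a] → ℝ are continuous, v(t,·) is C² in x for each t > 0, v(·,x) is C¹ in t, and they satisfy the predator equation ∂_t v(t,x) = d_v ∂_{xx} v(t,x) − γ v(t,x) + α u(t,x) v(t,x) for all t > 0 and x ∈ (0,a), with Neumann boundary conditions ∂_x v(t,0) = ∂_x v(t,a) = 0 for all t > 0, and with 0 ≤ u(t,x) ≤ 1 and v(t,x) ≥ 0 everywhere. Then, writing V(t) = ∫₀ᵃ v(t,x) dx, one has V(t) ≤ V(0)·exp(−(γ−α)t) for all t ≥ 0, and in particular ∫₀ᵃ v(t,x) dx → 0 as t → ∞. -/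
open Set Filter Topology



lemma aux_deriv_nonneg_of_left_max {f : ℝ → ℝ} {f' t t' : ℝ} (h : HasDerivAt f f' t)
    (ht : t' < t) (hmax : ∀ s ∈ Set.Icc t' t, f s ≤ f t) : 0 ≤ f' := by
  have h1 : Tendsto (slope f t) (𝓝[<] t) (𝓝 f') :=
    (hasDerivAt_iff_tendsto_slope.mp h).mono_left
      (nhdsWithin_mono _ (fun s hs => ne_of_lt hs))
  have h2 : ∀ᶠ s in 𝓝[<] t, 0 ≤ slope f t s := by
    filter_upwards [Ioo_mem_nhdsLT ht] with s hs
    have hle := hmax s ⟨hs.1.le, hs.2.le⟩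
    rw [slope_def_field]
    have hst : s - t < 0 := by linarith [hs.2]
    rw [div_nonneg_iff]
    right
    constructor <;> linarith
  exact ge_of_tendsto h1 h2

lemma aux_exists_gt_left {f : ℝ → ℝ} {c lo hi : ℝ} (hlh : lo < hi)
    (h : HasDerivWithinAt f c (Set.Icc lo hi) lo) (hc : 0 < c) :
    ∃ x ∈ Set.Icc lo hi, f lo < f x := by
  by_contra hcon
  push_neg at hcon
  haveI : (𝓝[Set.Ioo lo hi] lo).NeBot := by
    refine mem_closure_iff_nhdsWithin_neBot.mp ?_
    rw [closure_Ioo (ne_of_lt hlh)]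
    exact ⟨le_refl _, hlh.le⟩
  have h1 : Tendsto (slope f lo) (𝓝[Set.Ioo lo hi] lo) (𝓝 c) :=
    (hasDerivWithinAt_iff_tendsto_slope.mp h).mono_left
      (nhdsWithin_mono _ (fun s hs => ⟨⟨hs.1.le, hs.2.le⟩, ne_of_gt hs.1⟩))
  have h2 : ∀ᶠ s in 𝓝[Set.Ioo lo hi] lo, slope f lo s ≤ 0 := by
    filter_upwards [self_mem_nhdsWithin] with s hs
    rw [slope_def_field]
    have := hcon s ⟨hs.1.le, hs.2.le⟩
    apply div_nonpos_of_nonpos_of_nonneg <;> linarith [hs.1]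
  linarith [le_of_tendsto h1 h2]

lemma aux_exists_gt_right {f : ℝ → ℝ} {c lo hi : ℝ} (hlh : lo < hi)
    (h : HasDerivWithinAt f c (Set.Icc lo hi) hi) (hc : c < 0) :
    ∃ x ∈ Set.Icc lo hi, f hi < f x := by
  by_contra hcon
  push_neg at hcon
  haveI : (𝓝[Set.Ioo lo hi] hi).NeBot := by
    refine mem_closure_iff_nhdsWithin_neBot.mp ?_
    rw [closure_Ioo (ne_of_lt hlh)]
    exact ⟨hlh.le, le_refl _⟩
  have h1 : Tendsto (slope f hi) (𝓝[Set.Ioo lo hi] hi) (𝓝 c) :=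
    (hasDerivWithinAt_iff_tendsto_slope.mp h).mono_left
      (nhdsWithin_mono _ (fun s hs => ⟨⟨hs.1.le, hs.2.le⟩, ne_of_lt hs.2⟩))
  have h2 : ∀ᶠ s in 𝓝[Set.Ioo lo hi] hi, 0 ≤ slope f hi s := by
    filter_upwards [self_mem_nhdsWithin] with s hs
    rw [slope_def_field]
    have := hcon s ⟨hs.1.le, hs.2.le⟩
    rw [div_nonneg_iff]
    right
    constructor <;> linarith [hs.2]
  linarith [ge_of_tendsto h1 h2]


lemma aux_second_deriv_nonpos {f f' : ℝ → ℝ} {x₀ f'' lo hi : ℝ}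
    (hlo : lo < x₀) (hhi : x₀ < hi)
    (hf : ∀ x ∈ Set.Ioo lo hi, HasDerivAt f (f' x) x)
    (hf'' : HasDerivAt f' f'' x₀)
    (hmax : ∀ x ∈ Set.Ioo lo hi, f x ≤ f x₀) : f'' ≤ 0 := by
  by_contra hpos
  push_neg at hpos
  have hx₀ : x₀ ∈ Set.Ioo lo hi := ⟨hlo, hhi⟩
  have hf'0 : f' x₀ = 0 := by
    have hlm : IsLocalMax f x₀ := by
      filter_upwards [Ioo_mem_nhds hlo hhi] with y hy
      exact hmax y hy
    exact hlm.hasDerivAt_eq_zero (hf x₀ hx₀)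
  have h1 : Tendsto (slope f' x₀) (𝓝[>] x₀) (𝓝 f'') :=
    (hasDerivAt_iff_tendsto_slope.mp hf'').mono_left
      (nhdsWithin_mono _ (fun s hs => ne_of_gt hs))
  have h2 : ∀ᶠ s in 𝓝[>] x₀, 0 < slope f' x₀ s := h1.eventually (eventually_gt_nhds hpos)
  have h3 : Set.Ioo x₀ hi ∈ 𝓝[>] x₀ := Ioo_mem_nhdsGT_of_mem ⟨le_refl _, hhi⟩
  have h4 : {s | 0 < slope f' x₀ s} ∩ Set.Ioo x₀ hi ∈ 𝓝[>] x₀ := inter_mem h2 h3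
  obtain ⟨u, hu, hsub⟩ := mem_nhdsGT_iff_exists_Ioo_subset.mp h4
  -- on Ioo x₀ u, f' is positive
  have hu' : x₀ < u := hu
  set w := min u hi with hw
  have hx₀w : x₀ < w := lt_min hu' hhi
  set m := (x₀ + w) / 2 with hm
  have hx₀m : x₀ < m := by simp [hm]; linarith
  have hmw : m < w := by simp [hm]; linarith
  have hmhi : m < hi := lt_of_lt_of_le hmw (min_le_right _ _)
  have hsubIcc : Set.Icc x₀ m ⊆ Set.Ioo lo hi := fun y hy =>
    ⟨lt_of_lt_of_le hlo hy.1, lt_of_le_of_lt hy.2 hmhi⟩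
  have hmono : StrictMonoOn f (Set.Icc x₀ m) := by
    apply strictMonoOn_of_deriv_pos (convex_Icc _ _)
    · exact fun y hy => (hf y (hsubIcc hy)).continuousAt.continuousWithinAt
    · intro y hy
      rw [interior_Icc] at hy
      rw [(hf y (hsubIcc ⟨hy.1.le, hy.2.le⟩)).deriv]
      have hyu : y ∈ Set.Ioo x₀ u := ⟨hy.1, lt_of_lt_of_le (lt_trans hy.2 hmw) (min_le_left _ _)⟩
      have := (hsub hyu).1
      have hslope : slope f' x₀ y = f' y / (y - x₀) := by
        rw [slope_def_field, hf'0, sub_zero]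
      have h5 : 0 < f' y / (y - x₀) := by rw [← hslope]; exact this
      have hy0 : 0 < y - x₀ := by linarith [hy.1]
      by_contra hneg
      push_neg at hneg
      have : f' y / (y - x₀) ≤ 0 := div_nonpos_of_nonpos_of_nonneg hneg hy0.le
      linarith
  have : f x₀ < f m := hmono (left_mem_Icc.mpr hx₀m.le) (right_mem_Icc.mpr hx₀m.le) hx₀m
  have := hmax m ⟨lt_trans hlo hx₀m, hmhi⟩
  linarith


lemma aux_cos_pow (n : ℕ) (θ : ℝ) :
    Real.cos θ ^ n = ∑ k ∈ Finset.range (n+1),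
      ((n.choose k : ℝ) / 2 ^ n) * Real.cos ((2 * (k:ℝ) - (n:ℝ)) * θ) := by
  have key : ∀ z : ℂ, (2:ℂ)^n * Complex.cos z ^ n
      = ∑ k ∈ Finset.range (n+1), (n.choose k : ℂ)
          * Complex.cos ((2*(k:ℂ) - (n:ℂ)) * z) := by
    intro z
    have e1 : (2:ℂ)^n * Complex.cos z ^ n
        = (Complex.exp (z*Complex.I) + Complex.exp (-z*Complex.I))^n := by
      rw [← mul_pow, Complex.two_cos]
    have e2 : (Complex.exp (z*Complex.I) + Complex.exp (-z*Complex.I))^n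
        = ∑ k ∈ Finset.range (n+1), (n.choose k : ℂ)
            * Complex.exp ((2*(k:ℂ) - (n:ℂ)) * z * Complex.I) := by
      rw [add_pow]
      refine Finset.sum_congr rfl ?_
      intro k hk
      have hk' : k ≤ n := Nat.lt_succ_iff.mp (Finset.mem_range.mp hk)
      rw [← Complex.exp_nat_mul, ← Complex.exp_nat_mul, ← Complex.exp_add, mul_comm]
      congr 1
      push_cast [Nat.cast_sub hk']
      ring
    have e3 : ∑ k ∈ Finset.range (n+1), (n.choose k : ℂ)
            * Complex.exp ((2*(k:ℂ) - (n:ℂ)) * z * Complex.I)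
        = ∑ k ∈ Finset.range (n+1), (n.choose k : ℂ)
            * Complex.exp (-((2*(k:ℂ) - (n:ℂ)) * z) * Complex.I) := by
      rw [← Finset.sum_range_reflect]
      refine Finset.sum_congr rfl ?_
      intro k hk
      have hk' : k ≤ n := Nat.lt_succ_iff.mp (Finset.mem_range.mp hk)
      have h1 : n + 1 - 1 - k = n - k := by omega
      rw [h1, Nat.choose_symm hk']
      congr 1
      push_cast [Nat.cast_sub hk']
      ring
    have e4 : 2 * ((2:ℂ)^n * Complex.cos z ^ n)
        = ∑ k ∈ Finset.range (n+1), (n.choose k : ℂ)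
            * (2 * Complex.cos ((2*(k:ℂ) - (n:ℂ)) * z)) := by
      have : 2 * ((2:ℂ)^n * Complex.cos z ^ n)
          = (∑ k ∈ Finset.range (n+1), (n.choose k : ℂ)
              * Complex.exp ((2*(k:ℂ) - (n:ℂ)) * z * Complex.I))
            + ∑ k ∈ Finset.range (n+1), (n.choose k : ℂ)
              * Complex.exp (-((2*(k:ℂ) - (n:ℂ)) * z) * Complex.I) := by
        rw [e1, ← e3, ← e2]
        ring
      rw [this, ← Finset.sum_add_distrib]
      refine Finset.sum_congr rfl ?_
      intro k _
      rw [Complex.two_cos]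
      ring
    have e5 : (2:ℂ) * ((2:ℂ)^n * Complex.cos z ^ n)
        = 2 * ∑ k ∈ Finset.range (n+1), (n.choose k : ℂ)
            * Complex.cos ((2*(k:ℂ) - (n:ℂ)) * z) := by
      rw [e4, Finset.mul_sum]
      refine Finset.sum_congr rfl ?_
      intro k _
      ring
    exact mul_left_cancel₀ two_ne_zero e5
  have h := key (θ : ℂ)
  have h2 : ((2:ℝ)^n * Real.cos θ ^ n : ℝ)
      = ∑ k ∈ Finset.range (n+1), (n.choose k : ℝ) * Real.cos ((2*(k:ℝ) - (n:ℝ)) * θ) := by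
    apply Complex.ofReal_injective
    push_cast [Complex.ofReal_cos] at h ⊢
    convert h using 2
  have h3 : ∑ k ∈ Finset.range (n+1), ((n.choose k : ℝ)/2^n) * Real.cos ((2*(k:ℝ) - (n:ℝ))*θ)
      = (∑ k ∈ Finset.range (n+1), (n.choose k : ℝ) * Real.cos ((2*(k:ℝ) - (n:ℝ))*θ)) / 2^n := by
    rw [Finset.sum_div]
    refine Finset.sum_congr rfl ?_
    intro k _
    ring
  rw [h3, ← h2]
  field_simp

lemma heat_comparison
    (dv l a T : ℝ) (hdv : 0 < dv) (hl : 0 < l) (ha : 0 < a) (hT : 0 < T)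
    (v vx vxx : ℝ → ℝ → ℝ)
    (hv_cont : ContinuousOn (fun p : ℝ × ℝ => v p.1 p.2) (Set.Ici 0 ×ˢ Set.Icc 0 a))
    (hvx : ∀ t > (0:ℝ), ∀ x ∈ Set.Icc (0:ℝ) a,
      HasDerivWithinAt (v t) (vx t x) (Set.Icc 0 a) x)
    (hvxx : ∀ t > (0:ℝ), ∀ x ∈ Set.Ioo (0:ℝ) a, HasDerivAt (vx t) (vxx t x) x)
    (hpde : ∀ t > (0:ℝ), ∀ x ∈ Set.Ioo (0:ℝ) a,
      ∃ w, HasDerivAt (fun τ => v τ x) w t ∧ w ≤ dv * vxx t x - l * v t x)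
    (hneu0 : ∀ t > (0:ℝ), vx t 0 = 0) (hneua : ∀ t > (0:ℝ), vx t a = 0)
    (Ψ Ψt Ψx Ψxx : ℝ → ℝ → ℝ)
    (hΨcont : Continuous fun p : ℝ × ℝ => Ψ p.1 p.2)
    (hΨt : ∀ t x, HasDerivAt (fun τ => Ψ τ x) (Ψt t x) t)
    (hΨx : ∀ t x, HasDerivAt (fun y => Ψ t y) (Ψx t x) x)
    (hΨxx : ∀ t x, HasDerivAt (fun y => Ψx t y) (Ψxx t x) x)
    (hΨpde : ∀ t x, Ψt t x = dv * Ψxx t x - l * Ψ t x)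
    (hΨ0 : ∀ t, Ψx t 0 < 0) (hΨa : ∀ t, 0 < Ψx t a)
    (hinit : ∀ x ∈ Set.Icc (0:ℝ) a, v 0 x < Ψ 0 x) :
    ∀ t ∈ Set.Icc (0:ℝ) T, ∀ x ∈ Set.Icc (0:ℝ) a, v t x ≤ Ψ t x := by
  set K : Set (ℝ × ℝ) := Set.Icc (0:ℝ) T ×ˢ Set.Icc (0:ℝ) a with hK
  have hKcompact : IsCompact K := (isCompact_Icc).prod isCompact_Icc
  have hKne : K.Nonempty := ⟨(0,0), by
    constructor <;> simp [Set.mem_Icc] <;> [exact hT.le; exact ha.le]⟩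
  have hKsub : K ⊆ Set.Ici (0:ℝ) ×ˢ Set.Icc (0:ℝ) a := fun p hp => ⟨hp.1.1, hp.2⟩
  set z : ℝ × ℝ → ℝ := fun p => v p.1 p.2 - Ψ p.1 p.2 with hz
  have hzcont : ContinuousOn z K :=
    (hv_cont.mono hKsub).sub (hΨcont.continuousOn.mono (fun p _ => trivial))
  obtain ⟨p₀, hp₀K, hmax⟩ := hKcompact.exists_isMaxOn hKne hzcont
  have main : z p₀ ≤ 0 := by
    by_contra hcon
    push_neg at hcon
    obtain ⟨t₀, x₀⟩ := p₀
    obtain ⟨ht₀, hx₀⟩ := hp₀K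
    simp only [Set.mem_Icc] at ht₀ hx₀
    -- t₀ ≠ 0
    have ht₀pos : 0 < t₀ := by
      rcases eq_or_lt_of_le ht₀.1 with h0 | h
      · exfalso
        have := hinit x₀ (Set.mem_Icc.mpr hx₀)
        have hz0 : z (t₀, x₀) = v t₀ x₀ - Ψ t₀ x₀ := rfl
        rw [hz0] at hcon
        rw [← h0] at hcon
        linarith
      · exact h
    -- x₀ ≠ 0
    have hx₀pos : 0 < x₀ := by
      rcases eq_or_lt_of_le hx₀.1 with h0 | h
      · exfalso
        have hd : HasDerivWithinAt (fun y => v t₀ y - Ψ t₀ y)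
            (vx t₀ 0 - Ψx t₀ 0) (Set.Icc 0 a) 0 :=
          (hvx t₀ ht₀pos 0 (Set.left_mem_Icc.mpr ha.le)).sub (hΨx t₀ 0).hasDerivWithinAt
        have hdpos : 0 < vx t₀ 0 - Ψx t₀ 0 := by
          rw [hneu0 t₀ ht₀pos]
          linarith [hΨ0 t₀]
        obtain ⟨y, hy, hgt⟩ := aux_exists_gt_left ha hd hdpos
        have : z (t₀, y) ≤ z (t₀, x₀) := hmax ⟨Set.mem_Icc.mpr ht₀, hy⟩
        have hz1 : z (t₀, y) = v t₀ y - Ψ t₀ y := rfl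
        have hz2 : z (t₀, x₀) = v t₀ x₀ - Ψ t₀ x₀ := rfl
        rw [hz1, hz2, ← h0] at this
        linarith
      · exact h
    have hx₀lt : x₀ < a := by
      rcases eq_or_lt_of_le hx₀.2 with h0 | h
      · exfalso
        have hd : HasDerivWithinAt (fun y => v t₀ y - Ψ t₀ y)
            (vx t₀ a - Ψx t₀ a) (Set.Icc 0 a) a :=
          (hvx t₀ ht₀pos a (Set.right_mem_Icc.mpr ha.le)).sub (hΨx t₀ a).hasDerivWithinAt
        have hdneg : vx t₀ a - Ψx t₀ a < 0 := by
          rw [hneua t₀ ht₀pos]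
          linarith [hΨa t₀]
        obtain ⟨y, hy, hgt⟩ := aux_exists_gt_right ha hd hdneg
        have : z (t₀, y) ≤ z (t₀, x₀) := hmax ⟨Set.mem_Icc.mpr ht₀, hy⟩
        have hz1 : z (t₀, y) = v t₀ y - Ψ t₀ y := rfl
        have hz2 : z (t₀, x₀) = v t₀ x₀ - Ψ t₀ x₀ := rfl
        rw [hz1, hz2, h0] at this
        linarith
      · exact h
    have hx₀Ioo : x₀ ∈ Set.Ioo (0:ℝ) a := ⟨hx₀pos, hx₀lt⟩
    -- time derivative at the max is nonneg
    obtain ⟨w, hw, hwle⟩ := hpde t₀ ht₀pos x₀ hx₀Ioo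
    have htd : HasDerivAt (fun τ => v τ x₀ - Ψ τ x₀) (w - Ψt t₀ x₀) t₀ :=
      hw.sub (hΨt t₀ x₀)
    have htd_nonneg : 0 ≤ w - Ψt t₀ x₀ := by
      apply aux_deriv_nonneg_of_left_max htd (show (0:ℝ) < t₀ from ht₀pos)
      intro s hs
      have : z (s, x₀) ≤ z (t₀, x₀) :=
        hmax ⟨Set.mem_Icc.mpr ⟨hs.1, le_trans hs.2 ht₀.2⟩, Set.mem_Icc.mpr hx₀⟩
      exact this
    -- space: second derivative nonpos at the max
    have hsd : vxx t₀ x₀ - Ψxx t₀ x₀ ≤ 0 := by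
      apply aux_second_deriv_nonpos hx₀pos hx₀lt
        (f' := fun y => vx t₀ y - Ψx t₀ y)
      · intro y hy
        exact ((hvx t₀ ht₀pos y (Set.mem_Icc.mpr ⟨hy.1.le, hy.2.le⟩)).hasDerivAt
          (Icc_mem_nhds hy.1 hy.2)).sub (hΨx t₀ y)
      · exact (hvxx t₀ ht₀pos x₀ hx₀Ioo).sub (hΨxx t₀ x₀)
      · intro y hy
        have : z (t₀, y) ≤ z (t₀, x₀) :=
          hmax ⟨Set.mem_Icc.mpr ht₀, Set.mem_Icc.mpr ⟨hy.1.le, hy.2.le⟩⟩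
        exact this
    -- combine
    have hzval : z (t₀, x₀) = v t₀ x₀ - Ψ t₀ x₀ := rfl
    rw [hzval] at hcon
    have hΨeq := hΨpde t₀ x₀
    have hdvsd : dv * (vxx t₀ x₀ - Ψxx t₀ x₀) ≤ 0 := mul_nonpos_of_nonneg_of_nonpos hdv.le hsd
    nlinarith [hwle, htd_nonneg, hcon, hl]
  intro t ht x hx
  have := hmax (show ((t,x) : ℝ × ℝ) ∈ K from ⟨ht, hx⟩)
  have h2 : z (t, x) ≤ z p₀ := this
  have h3 : z (t,x) = v t x - Ψ t x := rfl
  rw [h3] at h2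
  linarith


section terms

lemma term_deriv_t (A B C t : ℝ) :
    HasDerivAt (fun τ => A * Real.exp (B*τ) * C) (B * (A * Real.exp (B*t) * C)) t := by
  have h1 : HasDerivAt (fun τ : ℝ => B*τ) B t := by
    simpa using (hasDerivAt_id t).const_mul B
  have h2 := (h1.exp.const_mul A).mul_const C
  refine h2.congr_deriv ?_
  ring

lemma term_deriv_cos (M b x : ℝ) :
    HasDerivAt (fun y => M * Real.cos (b*y)) (M * (-Real.sin (b*x) * b)) x := by
  have h1 : HasDerivAt (fun y : ℝ => b*y) b x := by
    simpa using (hasDerivAt_id x).const_mul b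
  exact h1.cos.const_mul M

lemma term_deriv_sin' (M b x : ℝ) :
    HasDerivAt (fun y => M * (-Real.sin (b*y) * b))
      (M * (-(Real.cos (b*x) * b) * b)) x := by
  have h1 : HasDerivAt (fun y : ℝ => b*y) b x := by
    simpa using (hasDerivAt_id x).const_mul b
  have h2 : (fun y => M * (-Real.sin (b*y) * b)) = fun y => (-(M*b)) * Real.sin (b*y) := by
    funext y; ring
  rw [h2]
  have h3 := h1.sin.const_mul (-(M*b))
  refine h3.congr_deriv ?_
  ring

lemma term_deriv_cosh (M μ e x : ℝ) :
    HasDerivAt (fun y => M * Real.cosh (μ*(y - e)))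
      (M * (Real.sinh (μ*(x - e)) * μ)) x := by
  have h1 : HasDerivAt (fun y : ℝ => μ*(y - e)) μ x := by
    simpa using ((hasDerivAt_id x).sub_const e).const_mul μ
  exact h1.cosh.const_mul M

lemma term_deriv_sinh (M μ e x : ℝ) :
    HasDerivAt (fun y => M * (Real.sinh (μ*(y - e)) * μ))
      (M * (Real.cosh (μ*(x - e)) * μ * μ)) x := by
  have h1 : HasDerivAt (fun y : ℝ => μ*(y - e)) μ x := by
    simpa using ((hasDerivAt_id x).sub_const e).const_mul μ
  have h2 : (fun y => M * (Real.sinh (μ*(y - e)) * μ)) = fun y => (M*μ) * Real.sinh (μ*(y-e)) := by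
    funext y; ring
  rw [h2]
  have h3 := h1.sinh.const_mul (M*μ)
  refine h3.congr_deriv ?_
  ring

lemma aux_integral_cos (b A : ℝ) (hb : b ≠ 0) :
    ∫ x in (0:ℝ)..A, Real.cos (b*x) = Real.sin (b*A)/b := by
  have hd : ∀ x ∈ Set.uIcc (0:ℝ) A, HasDerivAt (fun y => Real.sin (b*y)/b) (Real.cos (b*x)) x := by
    intro x _
    have h1 : HasDerivAt (fun y : ℝ => b*y) b x := by
      simpa using (hasDerivAt_id x).const_mul b
    have h3 := h1.sin.div_const b
    refine h3.congr_deriv ?_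
    field_simp
  rw [intervalIntegral.integral_eq_sub_of_hasDerivAt hd
    ((Real.continuous_cos.comp (continuous_const.mul continuous_id)).intervalIntegrable 0 A)]
  simp

end terms

section psi

variable (l dv c : ℝ) (s : Finset (ℕ×ℕ)) (co : ℕ×ℕ → ℝ) (fr : ℕ×ℕ → ℤ)

noncomputable def psiF : ℝ → ℝ → ℝ :=
  fun t x => ∑ q ∈ s, co q * Real.exp (-(l + dv*(((fr q : ℝ))*c)^2)*t) * Real.cos (((fr q : ℝ))*c*x)

noncomputable def psiT : ℝ → ℝ → ℝ :=
  fun t x => ∑ q ∈ s, (-(l + dv*(((fr q : ℝ))*c)^2)) *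
    (co q * Real.exp (-(l + dv*(((fr q : ℝ))*c)^2)*t) * Real.cos (((fr q : ℝ))*c*x))

noncomputable def psiX : ℝ → ℝ → ℝ :=
  fun t x => ∑ q ∈ s, co q * Real.exp (-(l + dv*(((fr q : ℝ))*c)^2)*t) *
    (-Real.sin (((fr q : ℝ))*c*x) * (((fr q : ℝ))*c))

noncomputable def psiXX : ℝ → ℝ → ℝ :=
  fun t x => ∑ q ∈ s, co q * Real.exp (-(l + dv*(((fr q : ℝ))*c)^2)*t) *
    (-(Real.cos (((fr q : ℝ))*c*x) * (((fr q : ℝ))*c)) * (((fr q : ℝ))*c))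

lemma psiF_deriv_t (t x : ℝ) :
    HasDerivAt (fun τ => psiF l dv c s co fr τ x) (psiT l dv c s co fr t x) t := by
  unfold psiF psiT
  apply HasDerivAt.fun_sum
  intro q _
  exact term_deriv_t _ _ _ _

lemma psiF_deriv_x (t x : ℝ) :
    HasDerivAt (fun y => psiF l dv c s co fr t y) (psiX l dv c s co fr t x) x := by
  unfold psiF psiX
  apply HasDerivAt.fun_sum
  intro q _
  exact term_deriv_cos _ _ _

lemma psiX_deriv_x (t x : ℝ) :
    HasDerivAt (fun y => psiX l dv c s co fr t y) (psiXX l dv c s co fr t x) x := by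
  unfold psiX psiXX
  apply HasDerivAt.fun_sum
  intro q _
  exact term_deriv_sin' _ _ _

lemma psiF_pde (t x : ℝ) :
    psiT l dv c s co fr t x = dv * psiXX l dv c s co fr t x - l * psiF l dv c s co fr t x := by
  unfold psiT psiXX psiF
  rw [Finset.mul_sum, Finset.mul_sum, ← Finset.sum_sub_distrib]
  refine Finset.sum_congr rfl ?_
  intro q _
  ring

lemma psiX_zero (t : ℝ) : psiX l dv c s co fr t 0 = 0 := by
  unfold psiX
  apply Finset.sum_eq_zero
  intro q _
  simp

lemma psiF_cont : Continuous (fun p : ℝ × ℝ => psiF l dv c s co fr p.1 p.2) := by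
  unfold psiF
  apply continuous_finset_sum
  intro q _
  apply Continuous.mul
  · apply Continuous.mul continuous_const
    exact Real.continuous_exp.comp (continuous_const.mul continuous_fst)
  · exact Real.continuous_cos.comp (continuous_const.mul continuous_snd)

lemma psiF_cont_x (t : ℝ) : Continuous (fun x => psiF l dv c s co fr t x) := by
  unfold psiF
  apply continuous_finset_sum
  intro q _
  exact continuous_const.mul (Real.continuous_cos.comp (continuous_const.mul continuous_id))

end psi

section psia

variable {a : ℝ} (l dv : ℝ) (s : Finset (ℕ×ℕ)) (co : ℕ×ℕ → ℝ) (fr : ℕ×ℕ → ℤ)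

lemma psiX_a (ha : 0 < a) (t : ℝ) : psiX l dv (Real.pi/a) s co fr t a = 0 := by
  unfold psiX
  apply Finset.sum_eq_zero
  intro q _
  have : ((fr q : ℝ)) * (Real.pi/a) * a = (fr q : ℝ) * Real.pi := by
    field_simp
  rw [this, Real.sin_int_mul_pi]
  ring

lemma psiF_integral (ha : 0 < a) (t : ℝ) :
    ∫ x in (0:ℝ)..a, psiF l dv (Real.pi/a) s co fr t x
      = ∑ q ∈ s, (if fr q = 0 then co q * Real.exp (-(l + dv*(((fr q : ℝ))*(Real.pi/a))^2)*t) * a else 0) := by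
  unfold psiF
  rw [intervalIntegral.integral_finset_sum]
  · refine Finset.sum_congr rfl ?_
    intro q _
    rw [intervalIntegral.integral_const_mul]
    by_cases hq : fr q = 0
    · simp only [hq, if_pos, Int.cast_zero, zero_mul, mul_zero, Real.cos_zero]
      rw [intervalIntegral.integral_const]
      simp
    · rw [if_neg hq]
      have hb : ((fr q : ℝ)) * (Real.pi/a) ≠ 0 := by
        apply mul_ne_zero
        · exact_mod_cast hq
        · positivity
      rw [aux_integral_cos _ _ hb]
      have : ((fr q : ℝ)) * (Real.pi/a) * a = (fr q : ℝ) * Real.pi := by field_simp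
      rw [this, Real.sin_int_mul_pi]
      simp
  · intro q _
    apply Continuous.intervalIntegrable
    exact (continuous_const.mul (Real.continuous_cos.comp (continuous_const.mul continuous_id)))

lemma psiF_integral_decay (ha : 0 < a) (t : ℝ) :
    ∫ x in (0:ℝ)..a, psiF l dv (Real.pi/a) s co fr t x
      = Real.exp (-(l*t)) * ∫ x in (0:ℝ)..a, psiF l dv (Real.pi/a) s co fr 0 x := by
  rw [psiF_integral l dv s co fr ha t, psiF_integral l dv s co fr ha 0, Finset.mul_sum]
  refine Finset.sum_congr rfl ?_
  intro q _
  by_cases hq : fr q = 0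
  · rw [if_pos hq, if_pos hq, hq]
    push_cast
    norm_num
    ring
  · rw [if_neg hq, if_neg hq]
    ring

end psia

section gbar
variable (l a δ μ : ℝ)

noncomputable def gF : ℝ → ℝ → ℝ :=
  fun t x => δ * Real.exp (-(l/2)*t) * Real.cosh (μ*(x - a/2))

noncomputable def gT : ℝ → ℝ → ℝ :=
  fun t x => (-(l/2)) * (δ * Real.exp (-(l/2)*t) * Real.cosh (μ*(x - a/2)))

noncomputable def gX : ℝ → ℝ → ℝ :=
  fun t x => δ * Real.exp (-(l/2)*t) * (Real.sinh (μ*(x - a/2)) * μ)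

noncomputable def gXX : ℝ → ℝ → ℝ :=
  fun t x => δ * Real.exp (-(l/2)*t) * (Real.cosh (μ*(x - a/2)) * μ * μ)

lemma gF_deriv_t (t x : ℝ) : HasDerivAt (fun τ => gF l a δ μ τ x) (gT l a δ μ t x) t :=
  term_deriv_t δ (-(l/2)) (Real.cosh (μ*(x - a/2))) t

lemma gF_deriv_x (t x : ℝ) : HasDerivAt (fun y => gF l a δ μ t y) (gX l a δ μ t x) x :=
  term_deriv_cosh (δ * Real.exp (-(l/2)*t)) μ (a/2) x

lemma gX_deriv_x (t x : ℝ) : HasDerivAt (fun y => gX l a δ μ t y) (gXX l a δ μ t x) x :=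
  term_deriv_sinh (δ * Real.exp (-(l/2)*t)) μ (a/2) x

lemma gF_cont : Continuous (fun p : ℝ × ℝ => gF l a δ μ p.1 p.2) := by
  unfold gF
  apply Continuous.mul
  · exact continuous_const.mul (Real.continuous_exp.comp (continuous_const.mul continuous_fst))
  · exact Real.continuous_cosh.comp (continuous_const.mul (continuous_snd.sub continuous_const))

lemma gF_cont_x (t : ℝ) : Continuous (fun x => gF l a δ μ t x) := by
  unfold gF
  exact continuous_const.mul
    (Real.continuous_cosh.comp (continuous_const.mul (continuous_id.sub continuous_const)))

lemma gF_pde {dv : ℝ} (hμ : dv * μ^2 = l/2) (t x : ℝ) :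
    gT l a δ μ t x = dv * gXX l a δ μ t x - l * gF l a δ μ t x := by
  unfold gT gXX gF
  linear_combination (-(δ * Real.exp (-(l/2)*t) * Real.cosh (μ*(x - a/2)))) * hμ

lemma gX_neg_at_zero (ha : 0 < a) (hδ : 0 < δ) (hμ : 0 < μ) (t : ℝ) :
    gX l a δ μ t 0 < 0 := by
  unfold gX
  have h1 : Real.sinh (μ*((0:ℝ) - a/2)) < 0 := by
    rw [show Real.sinh (μ*((0:ℝ) - a/2)) < 0 ↔ Real.sinh (μ*((0:ℝ) - a/2)) < Real.sinh 0 by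
      rw [Real.sinh_zero]]
    rw [Real.sinh_lt_sinh]
    nlinarith
  have h2 : 0 < δ * Real.exp (-(l/2)*t) := by positivity
  exact mul_neg_of_pos_of_neg h2 (mul_neg_of_neg_of_pos h1 hμ)

lemma gX_pos_at_a (ha : 0 < a) (hδ : 0 < δ) (hμ : 0 < μ) (t : ℝ) :
    0 < gX l a δ μ t a := by
  unfold gX
  have h1 : 0 < Real.sinh (μ*(a - a/2)) := by
    rw [show (0:ℝ) < Real.sinh (μ*(a - a/2)) ↔ Real.sinh 0 < Real.sinh (μ*(a - a/2)) by
      rw [Real.sinh_zero]]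
    rw [Real.sinh_lt_sinh]
    nlinarith
  have h2 : 0 < δ * Real.exp (-(l/2)*t) := by positivity
  exact mul_pos h2 (mul_pos h1 hμ)

lemma gF_pos (ha : 0 < a) (hδ : 0 < δ) (t x : ℝ) : 0 < gF l a δ μ t x := by
  unfold gF
  have := Real.cosh_pos (μ*(x - a/2))
  positivity

lemma gF_integral_le (hl : 0 ≤ l) (ha : 0 < a) (hδ : 0 < δ) (t : ℝ) (ht : 0 ≤ t) :
    ∫ x in (0:ℝ)..a, gF l a δ μ t x ≤ δ * ∫ x in (0:ℝ)..a, Real.cosh (μ*(x - a/2)) := by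
  have hC : 0 ≤ ∫ x in (0:ℝ)..a, Real.cosh (μ*(x - a/2)) := by
    apply intervalIntegral.integral_nonneg ha.le
    intro x _
    exact (Real.cosh_pos _).le
  unfold gF
  have : ∫ x in (0:ℝ)..a, δ * Real.exp (-(l/2)*t) * Real.cosh (μ*(x - a/2))
      = (δ * Real.exp (-(l/2)*t)) * ∫ x in (0:ℝ)..a, Real.cosh (μ*(x - a/2)) := by
    rw [← intervalIntegral.integral_const_mul]
  rw [this]
  apply mul_le_mul_of_nonneg_right _ hC
  have he : Real.exp (-(l/2)*t) ≤ 1 := by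
    rw [Real.exp_le_one_iff]
    nlinarith
  nlinarith

end gbar

set_option maxHeartbeats 2000000 in
/-- **Predator extinction (1D case of Proposition 1.1).**
The predator density `v` diffuses on `(0,a)` with Neumann boundary conditions,
dies at rate `γ` and grows through predation `α u v` with `0 ≤ u ≤ 1`.
If `α < γ` then the total predator population `V(t) = ∫₀ᵃ v(t,x) dx` satisfies
`V(t) ≤ V(0) exp(−(γ−α) t)` and tends to `0` as `t → ∞`. -/
theorem predator_extinction_1D
    (dv α β γ a : ℝ) (hdv : 0 < dv) (hα : 0 < α) (hβ : 0 < β) (hγ : 0 < γ)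
    (ha : 0 < a) (hαγ : α < γ)
    (u v vx vxx : ℝ → ℝ → ℝ)
    (hu_cont : ContinuousOn (fun p : ℝ × ℝ => u p.1 p.2) (Set.Ici 0 ×ˢ Set.Icc 0 a))
    (hv_cont : ContinuousOn (fun p : ℝ × ℝ => v p.1 p.2) (Set.Ici 0 ×ˢ Set.Icc 0 a))
    -- `v(t,·)` is C² in x for each `t > 0`:
    (hvx : ∀ t > (0:ℝ), ∀ x ∈ Set.Icc (0:ℝ) a,
      HasDerivWithinAt (v t) (vx t x) (Set.Icc 0 a) x)
    (hvxx : ∀ t > (0:ℝ), ∀ x ∈ Set.Ioo (0:ℝ) a, HasDerivAt (vx t) (vxx t x) x)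
    -- predator equation `∂ₜ v = d_v ∂ₓₓ v − γ v + α u v` for `t > 0`, `x ∈ (0,a)`:
    (hpde : ∀ t > (0:ℝ), ∀ x ∈ Set.Ioo (0:ℝ) a,
      HasDerivAt (fun τ => v τ x) (dv * vxx t x - γ * v t x + α * u t x * v t x) t)
    -- Neumann boundary conditions:
    (hneu0 : ∀ t > (0:ℝ), vx t 0 = 0) (hneua : ∀ t > (0:ℝ), vx t a = 0)
    -- bounds `0 ≤ u ≤ 1` and `v ≥ 0`:
    (hu01 : ∀ t ≥ (0:ℝ), ∀ x ∈ Set.Icc (0:ℝ) a, u t x ∈ Set.Icc (0:ℝ) 1)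
    (hv0 : ∀ t ≥ (0:ℝ), ∀ x ∈ Set.Icc (0:ℝ) a, 0 ≤ v t x) :
    (∀ t ≥ (0:ℝ),
      (∫ x in (0:ℝ)..a, v t x) ≤ (∫ x in (0:ℝ)..a, v 0 x) * Real.exp (-(γ - α) * t)) ∧
    Filter.Tendsto (fun t => ∫ x in (0:ℝ)..a, v t x) Filter.atTop (nhds 0) := by
  have hπ : (0:ℝ) < Real.pi := Real.pi_pos
  have hlpos : 0 < γ - α := by linarith
  have hslice : ∀ t : ℝ, 0 ≤ t → ContinuousOn (fun x : ℝ => v t x) (Set.Icc 0 a) := by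
    intro t ht
    exact hv_cont.comp ((continuous_const.prodMk continuous_id).continuousOn)
      (fun x hx => ⟨ht, hx⟩)
  have hVint : ∀ t : ℝ, 0 ≤ t →
      IntervalIntegrable (fun x => v t x) MeasureTheory.volume 0 a := by
    intro t ht
    apply ContinuousOn.intervalIntegrable
    rw [Set.uIcc_of_le ha.le]
    exact hslice t ht
  have key : ∀ t : ℝ, 0 ≤ t →
      (∫ x in (0:ℝ)..a, v t x) ≤ (∫ x in (0:ℝ)..a, v 0 x) * Real.exp (-(γ - α) * t) := by
    intro t ht
    rcases eq_or_lt_of_le ht with h0 | htpos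
    · rw [← h0]
      simp
    · apply le_of_forall_pos_le_add
      intro ε hε
      set l := γ - α with hldef
      clear_value l
      have hε₁ : (0:ℝ) < ε / (6*(a+1)) := by positivity
      set ε₁ := ε / (6*(a+1)) with hε₁def
      clear_value ε₁
      have harcmap : ∀ y : ℝ, a/Real.pi * Real.arccos y ∈ Set.Icc (0:ℝ) a := by
        intro y
        constructor
        · have h1 := Real.arccos_nonneg y
          positivity
        · have h1 := Real.arccos_le_pi y
          calc a/Real.pi * Real.arccos y ≤ a/Real.pi * Real.pi :=
                mul_le_mul_of_nonneg_left h1 (by positivity)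
            _ = a := by field_simp
      have hwcont : ContinuousOn (fun y : ℝ => v 0 (a/Real.pi * Real.arccos y) + 2*ε₁)
          (Set.Icc (-1) 1) := by
        apply ContinuousOn.add _ continuousOn_const
        apply (hslice 0 le_rfl).comp
        · exact Continuous.continuousOn (by continuity)
        · intro y _
          exact harcmap y
      obtain ⟨p, hp⟩ := exists_polynomial_near_of_continuousOn (-1) 1 _ hwcont ε₁ hε₁
      have hbra : ∀ x ∈ Set.Icc (0:ℝ) a,
          v 0 x + ε₁ < p.eval (Real.cos (Real.pi/a * x)) ∧
          p.eval (Real.cos (Real.pi/a * x)) < v 0 x + 3*ε₁ := by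
        intro x hx
        have hθ1 : 0 ≤ Real.pi/a * x := by
          have h1 := hx.1
          positivity
        have hθ2 : Real.pi/a * x ≤ Real.pi := by
          calc Real.pi/a * x ≤ Real.pi/a * a :=
                mul_le_mul_of_nonneg_left hx.2 (by positivity)
            _ = Real.pi := by field_simp
        have hy : Real.cos (Real.pi/a * x) ∈ Set.Icc (-1:ℝ) 1 :=
          ⟨Real.neg_one_le_cos _, Real.cos_le_one _⟩
        have h3 := hp _ hy
        rw [Real.arccos_cos hθ1 hθ2] at h3
        have hval : a/Real.pi * (Real.pi/a * x) = x := by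
          field_simp
        rw [hval, abs_lt] at h3
        constructor <;> linarith [h3.1, h3.2]
      set s : Finset (ℕ×ℕ) := Finset.range (p.natDegree+1) ×ˢ Finset.range (p.natDegree+1)
        with hs
      set co : ℕ×ℕ → ℝ := fun q => p.coeff q.1 * (q.1.choose q.2) / 2 ^ q.1 with hco
      set fr : ℕ×ℕ → ℤ := fun q => 2*(q.2:ℤ) - (q.1:ℤ) with hfr
      clear_value s co fr
      have hψ0 : ∀ x : ℝ, psiF l dv (Real.pi/a) s co fr 0 x
          = p.eval (Real.cos (Real.pi/a * x)) := by
        intro x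
        unfold psiF
        rw [Polynomial.eval_eq_sum_range, hs, Finset.sum_product]
        refine Finset.sum_congr rfl ?_
        intro i hi
        rw [aux_cos_pow i (Real.pi/a * x), Finset.mul_sum,
          Finset.sum_subset (Finset.range_subset_range.mpr (Nat.succ_le_of_lt (Finset.mem_range.mp hi)))
            (fun k _ hk => by
              have : i < k := by
                by_contra hik
                exact hk (Finset.mem_range.mpr (by omega))
              simp [Nat.choose_eq_zero_of_lt this])]
        refine Finset.sum_congr rfl ?_
        intro k _
        have hargs : ((fr (i,k) : ℝ))*(Real.pi/a)*x = (2*(k:ℝ) - (i:ℝ))*(Real.pi/a*x) := by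
          rw [hfr]
          push_cast
          ring
        rw [hargs, hco]
        simp [Real.exp_zero]
        ring
      set μ := Real.sqrt (l/(2*dv)) with hμdef
      have hμpos : 0 < μ := Real.sqrt_pos.mpr (by positivity)
      have hμsq : dv * μ^2 = l/2 := by
        rw [hμdef, Real.sq_sqrt (by positivity : (0:ℝ) ≤ l/(2*dv))]
        field_simp
      clear_value μ
      have hCμ0 : 0 ≤ ∫ x in (0:ℝ)..a, Real.cosh (μ*(x - a/2)) :=
        intervalIntegral.integral_nonneg ha.le (fun x _ => (Real.cosh_pos _).le)
      set Cμ := ∫ x in (0:ℝ)..a, Real.cosh (μ*(x - a/2)) with hCμdef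
      clear_value Cμ
      have hδpos : (0:ℝ) < ε/(2*(Cμ+1)) := by positivity
      set δ := ε/(2*(Cμ+1)) with hδdef
      clear_value δ
      have hpde' : ∀ τ > (0:ℝ), ∀ y ∈ Set.Ioo (0:ℝ) a,
          ∃ w, HasDerivAt (fun σ => v σ y) w τ ∧ w ≤ dv * vxx τ y - l * v τ y := by
        intro τ hτ y hy
        refine ⟨_, hpde τ hτ y hy, ?_⟩
        have hu := hu01 τ hτ.le y ⟨hy.1.le, hy.2.le⟩
        have hvv := hv0 τ hτ.le y ⟨hy.1.le, hy.2.le⟩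
        have h5 : α * u τ y * v τ y ≤ α * v τ y := by
          nlinarith [mul_nonneg (mul_nonneg hα.le hvv) (sub_nonneg.mpr hu.2)]
        rw [hldef]
        linarith
      have hcomp := heat_comparison dv l a t hdv hlpos ha htpos
        v vx vxx hv_cont hvx hvxx hpde' hneu0 hneua
        (fun t x => psiF l dv (Real.pi/a) s co fr t x + gF l a δ μ t x)
        (fun t x => psiT l dv (Real.pi/a) s co fr t x + gT l a δ μ t x)
        (fun t x => psiX l dv (Real.pi/a) s co fr t x + gX l a δ μ t x)
        (fun t x => psiXX l dv (Real.pi/a) s co fr t x + gXX l a δ μ t x)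
        ((psiF_cont l dv (Real.pi/a) s co fr).add (gF_cont l a δ μ))
        (fun t x => (psiF_deriv_t l dv (Real.pi/a) s co fr t x).add (gF_deriv_t l a δ μ t x))
        (fun t x => (psiF_deriv_x l dv (Real.pi/a) s co fr t x).add (gF_deriv_x l a δ μ t x))
        (fun t x => (psiX_deriv_x l dv (Real.pi/a) s co fr t x).add (gX_deriv_x l a δ μ t x))
        (fun t x => by
          show psiT l dv (Real.pi/a) s co fr t x + gT l a δ μ t x
            = dv * (psiXX l dv (Real.pi/a) s co fr t x + gXX l a δ μ t x)
              - l * (psiF l dv (Real.pi/a) s co fr t x + gF l a δ μ t x)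
          rw [psiF_pde l dv (Real.pi/a) s co fr t x, gF_pde l a δ μ hμsq t x]
          ring)
        (fun t => by
          show psiX l dv (Real.pi/a) s co fr t 0 + gX l a δ μ t 0 < 0
          rw [psiX_zero]
          simpa using gX_neg_at_zero l a δ μ ha hδpos hμpos t)
        (fun t => by
          show 0 < psiX l dv (Real.pi/a) s co fr t a + gX l a δ μ t a
          rw [psiX_a l dv s co fr ha]
          simpa using gX_pos_at_a l a δ μ ha hδpos hμpos t)
        (fun x hx => by
          show v 0 x < psiF l dv (Real.pi/a) s co fr 0 x + gF l a δ μ 0 x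
          rw [hψ0 x]
          have h6 := (hbra x hx).1
          have hg := gF_pos l a δ μ ha hδpos 0 x
          linarith)
      have hvle : ∀ x ∈ Set.Icc (0:ℝ) a,
          v t x ≤ psiF l dv (Real.pi/a) s co fr t x + gF l a δ μ t x := by
        intro x hx
        exact hcomp t ⟨ht, le_refl t⟩ x hx
      have hψcontx : ∀ τ : ℝ, Continuous (fun x => psiF l dv (Real.pi/a) s co fr τ x) :=
        fun τ => psiF_cont_x l dv (Real.pi/a) s co fr τ
      have hgcontx : ∀ τ : ℝ, Continuous (fun x => gF l a δ μ τ x) :=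
        fun τ => gF_cont_x l a δ μ τ
      have hint1 : (∫ x in (0:ℝ)..a, v t x)
          ≤ ∫ x in (0:ℝ)..a,
              (psiF l dv (Real.pi/a) s co fr t x + gF l a δ μ t x) :=
        intervalIntegral.integral_mono_on ha.le (hVint t ht)
          (((hψcontx t).add (hgcontx t)).intervalIntegrable 0 a) hvle
      have hint2 : (∫ x in (0:ℝ)..a,
            (psiF l dv (Real.pi/a) s co fr t x + gF l a δ μ t x))
          = (∫ x in (0:ℝ)..a, psiF l dv (Real.pi/a) s co fr t x)
            + ∫ x in (0:ℝ)..a, gF l a δ μ t x :=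
        intervalIntegral.integral_add ((hψcontx t).intervalIntegrable 0 a)
          ((hgcontx t).intervalIntegrable 0 a)
      have hint3 := psiF_integral_decay l dv s co fr ha t
      have hint4 : (∫ x in (0:ℝ)..a, psiF l dv (Real.pi/a) s co fr 0 x)
          ≤ (∫ x in (0:ℝ)..a, v 0 x) + 3*ε₁*a := by
        have h6 : (∫ x in (0:ℝ)..a, (v 0 x + 3*ε₁))
            = (∫ x in (0:ℝ)..a, v 0 x) + 3*ε₁*a := by
          rw [intervalIntegral.integral_add (hVint 0 le_rfl) intervalIntegrable_const,
            intervalIntegral.integral_const]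
          simp [smul_eq_mul]
          ring
        rw [← h6]
        apply intervalIntegral.integral_mono_on ha.le
          ((hψcontx 0).intervalIntegrable 0 a)
          ((hVint 0 le_rfl).add intervalIntegrable_const)
        intro x hx
        rw [hψ0 x]
        exact ((hbra x hx).2).le
      have hint5 := gF_integral_le l a δ μ hlpos.le ha hδpos t ht
      rw [← hCμdef] at hint5
      have hexp1 : Real.exp (-(l*t)) ≤ 1 := by
        rw [Real.exp_le_one_iff]
        nlinarith [hlpos]
      have hexp0 : (0:ℝ) ≤ Real.exp (-(l*t)) := (Real.exp_pos _).le
      have hε₁eq : ε₁ * (6*(a+1)) = ε := by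
        rw [hε₁def]
        field_simp
      have hεa : 3*ε₁*a ≤ ε/2 := by nlinarith [hε₁.le, ha.le]
      have hδeq : δ * (2*(Cμ+1)) = ε := by
        rw [hδdef]
        field_simp
      have hδC : δ * Cμ ≤ ε/2 := by nlinarith [hδpos.le, hCμ0]
      have hfin1 : (∫ x in (0:ℝ)..a, v t x)
          ≤ Real.exp (-(l*t)) * ((∫ x in (0:ℝ)..a, v 0 x) + 3*ε₁*a) + δ * Cμ := by
        calc (∫ x in (0:ℝ)..a, v t x)
            ≤ _ := hint1
          _ = _ := hint2
          _ ≤ Real.exp (-(l*t)) * (∫ x in (0:ℝ)..a, psiF l dv (Real.pi/a) s co fr 0 x)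
              + δ * Cμ := by
              rw [hint3]
              exact add_le_add (le_refl _) hint5
          _ ≤ _ := add_le_add (mul_le_mul_of_nonneg_left hint4 hexp0) (le_refl _)
      have hfin3 : Real.exp (-(l*t)) * (3*ε₁*a) ≤ ε/2 := by
        have h7 : Real.exp (-(l*t)) * (3*ε₁*a) ≤ 3*ε₁*a :=
          mul_le_of_le_one_left (by positivity) hexp1
        linarith
      rw [neg_mul]
      nlinarith [hfin1, hfin3, hδC, hexp0]
  constructor
  · exact fun t ht => key t ht
  · have hub : ∀ᶠ t in Filter.atTop, (∫ x in (0:ℝ)..a, v t x)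
        ≤ (∫ x in (0:ℝ)..a, v 0 x) * Real.exp (-(γ-α)*t) := by
      filter_upwards [Filter.eventually_ge_atTop (0:ℝ)] with t ht using key t ht
    have hlb : ∀ᶠ t in Filter.atTop, (0:ℝ) ≤ ∫ x in (0:ℝ)..a, v t x := by
      filter_upwards [Filter.eventually_ge_atTop (0:ℝ)] with t ht
      exact intervalIntegral.integral_nonneg ha.le (fun x hx => hv0 t ht x hx)
    have hexp : Filter.Tendsto (fun t : ℝ => (∫ x in (0:ℝ)..a, v 0 x) * Real.exp (-(γ-α)*t))
        Filter.atTop (nhds 0) := by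
      have h1 : Filter.Tendsto (fun t : ℝ => -(γ-α)*t) Filter.atTop Filter.atBot :=
        Filter.Tendsto.const_mul_atTop_of_neg (by linarith) Filter.tendsto_id
      have h2 := Real.tendsto_exp_atBot.comp h1
      have h3 := h2.const_mul (∫ x in (0:ℝ)..a, v 0 x)
      simpa using h3
    exact tendsto_of_tendsto_of_tendsto_of_le_of_le' tendsto_const_nhds hexp hlb hub
end

section
/- Let d_u > 0, L > 0, and let f be a bistable nonlinearity. Suppose u : [0,L] → ℝ is a C² solution of the Neumann problem −d_u u'' = f(u) on (0,L) with u'(0) = u'(L) = 0, and suppose θ < u(x) ≤ 1 for all x ∈ [0,L]. Then u is identically equal to 1. -/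
open Set

/-- A bistable nonlinearity: continuous on `[0,1]`, zeros exactly `0, θ, 1`,
negative on `(0,θ)`, positive on `(θ,1)`, and with positive total mass. -/
structure Bistable (f : ℝ → ℝ) (θ : ℝ) : Prop where
  cont : ContinuousOn f (Set.Icc 0 1)
  θ_mem : θ ∈ Set.Ioo (0:ℝ) 1
  f0 : f 0 = 0
  fθ : f θ = 0
  f1 : f 1 = 0
  neg : ∀ s ∈ Set.Ioo (0:ℝ) θ, f s < 0
  pos : ∀ s ∈ Set.Ioo θ (1:ℝ), 0 < f s
  int_pos : 0 < ∫ s in (0:ℝ)..1, f s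

/-- **One-dimensional version of the final step of Lemma 2.5.**
A C² solution of the Neumann problem `−d_u u'' = f(u)` on `(0,L)`,
`u'(0) = u'(L) = 0`, which satisfies `θ < u ≤ 1` on `[0,L]` must be
identically equal to `1`. -/
theorem neumann_solution_above_theta_is_one
    (du L : ℝ) (hdu : 0 < du) (hL : 0 < L)
    (f : ℝ → ℝ) (θ : ℝ) (hf : Bistable f θ)
    (u u' u'' : ℝ → ℝ)
    (hd1 : ∀ x ∈ Set.Icc 0 L, HasDerivWithinAt u (u' x) (Set.Icc 0 L) x)
    (hd2 : ∀ x ∈ Set.Icc 0 L, HasDerivWithinAt u' (u'' x) (Set.Icc 0 L) x)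
    (hd2c : ContinuousOn u'' (Set.Icc 0 L))
    (heq : ∀ x ∈ Set.Ioo (0:ℝ) L, -du * u'' x = f (u x))
    (hbc0 : u' 0 = 0) (hbcL : u' L = 0)
    (hbd : ∀ x ∈ Set.Icc (0:ℝ) L, θ < u x ∧ u x ≤ 1) :
    ∀ x ∈ Set.Icc (0:ℝ) L, u x = 1 := by
  have hint : interior (Set.Icc (0:ℝ) L) = Set.Ioo 0 L := interior_Icc
  -- f(u x) ≥ 0 on [0,L]
  have hfu : ∀ x ∈ Set.Icc (0:ℝ) L, 0 ≤ f (u x) := by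
    intro x hx
    rcases (hbd x hx).2.lt_or_eq with h | h
    · exact le_of_lt (hf.pos (u x) ⟨(hbd x hx).1, h⟩)
    · rw [h, hf.f1]
  -- derivative of u' at interior points
  have hda : ∀ x ∈ Set.Ioo (0:ℝ) L, HasDerivAt u' (u'' x) x := by
    intro x hx
    exact (hd2 x (Set.mem_Icc_of_Ioo hx)).hasDerivAt (Icc_mem_nhds hx.1 hx.2)
  -- u'' ≤ 0 on (0,L)
  have hnp : ∀ x ∈ Set.Ioo (0:ℝ) L, u'' x ≤ 0 := by
    intro x hx
    have h1 := heq x hx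
    have h2 := hfu x (Set.mem_Icc_of_Ioo hx)
    nlinarith
  -- u' is antitone on [0,L]
  have hcont' : ContinuousOn u' (Set.Icc 0 L) := fun x hx =>
    (hd2 x hx).continuousWithinAt
  have hanti : AntitoneOn u' (Set.Icc 0 L) := by
    apply antitoneOn_of_deriv_nonpos (convex_Icc 0 L) hcont'
    · rw [hint]
      exact fun x hx => (hda x hx).differentiableAt.differentiableWithinAt
    · rw [hint]
      intro x hx
      rw [(hda x hx).deriv]
      exact hnp x hx
  -- hence u' = 0 on [0,L]
  have hzero : ∀ x ∈ Set.Icc (0:ℝ) L, u' x = 0 := by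
    intro x hx
    have h1 : u' x ≤ u' 0 := hanti (Set.left_mem_Icc.2 hL.le) hx hx.1
    have h2 : u' L ≤ u' x := hanti hx (Set.right_mem_Icc.2 hL.le) hx.2
    rw [hbc0] at h1; rw [hbcL] at h2; linarith
  -- u is constant on [0,L]
  have hcontu : ContinuousOn u (Set.Icc 0 L) := fun x hx =>
    (hd1 x hx).continuousWithinAt
  have hdu1 : ∀ x ∈ Set.Ioo (0:ℝ) L, HasDerivAt u (u' x) x := by
    intro x hx
    exact (hd1 x (Set.mem_Icc_of_Ioo hx)).hasDerivAt (Icc_mem_nhds hx.1 hx.2)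
  have hconst : ∀ x ∈ Set.Icc (0:ℝ) L, u x = u 0 := by
    have hmono : MonotoneOn u (Set.Icc 0 L) := by
      apply monotoneOn_of_deriv_nonneg (convex_Icc 0 L) hcontu
      · rw [hint]
        exact fun x hx => (hdu1 x hx).differentiableAt.differentiableWithinAt
      · rw [hint]
        intro x hx
        rw [(hdu1 x hx).deriv, hzero x (Set.mem_Icc_of_Ioo hx)]
    have hanti2 : AntitoneOn u (Set.Icc 0 L) := by
      apply antitoneOn_of_deriv_nonpos (convex_Icc 0 L) hcontu
      · rw [hint]
        exact fun x hx => (hdu1 x hx).differentiableAt.differentiableWithinAt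
      · rw [hint]
        intro x hx
        rw [(hdu1 x hx).deriv, hzero x (Set.mem_Icc_of_Ioo hx)]
    intro x hx
    have h0 : (0:ℝ) ∈ Set.Icc (0:ℝ) L := Set.left_mem_Icc.2 hL.le
    exact le_antisymm (hanti2 h0 hx hx.1) (hmono h0 hx hx.1)
  -- evaluate the equation at L/2
  have hmid : L / 2 ∈ Set.Ioo (0:ℝ) L := ⟨by linarith, by linarith⟩
  have hd2mid : HasDerivAt u' (u'' (L/2)) (L/2) := hda _ hmid
  -- u' equals 0 near L/2, so u'' (L/2) = 0
  have hnhds : Set.Ioo (0:ℝ) L ∈ nhds (L/2) := Ioo_mem_nhds hmid.1 hmid.2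
  have hu'eq : u' =ᶠ[nhds (L/2)] fun _ => 0 := by
    filter_upwards [hnhds] with y hy
    exact hzero y (Set.mem_Icc_of_Ioo hy)
  have hd2mid' : HasDerivAt (fun _ : ℝ => (0:ℝ)) (u'' (L/2)) (L/2) :=
    hd2mid.congr_of_eventuallyEq hu'eq.symm
  have hzero2 : u'' (L/2) = 0 := by
    have := hd2mid'.deriv
    simpa using this.symm
  have hfz : f (u (L/2)) = 0 := by
    have := heq (L/2) hmid
    rw [hzero2] at this
    linarith
  -- conclude u (L/2) = 1
  have hbdm := hbd (L/2) (Set.mem_Icc_of_Ioo hmid)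
  have hu1 : u (L/2) = 1 := by
    rcases hbdm.2.lt_or_eq with h | h
    · exact absurd hfz (ne_of_gt (hf.pos _ ⟨hbdm.1, h⟩))
    · exact h
  intro x hx
  rw [hconst x hx, ← hconst (L/2) (Set.mem_Icc_of_Ioo hmid), hu1]
end

section
/- Let d_u > 0, let f be a bistable nonlinearity, and let 0 < p < 1. Suppose u : [0,L] → ℝ is a C² solution of −d_u u'' = f(u) on (0,L) with u(0) = p, u'(L) = 0, satisfying 0 < u(x) < 1 for all x ∈ [0,L] and u(L) > θ'. Then u is strictly increasing: u'(x) > 0 for every x ∈ [0,L). -/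
open Set

/-- **Monotonicity step of the appendix proof of Proposition 4.2.**
A C² solution of `−d_u u'' = f(u)` on `(0,L)` with `u(0) = p`, `u'(L) = 0`,
`0 < u < 1` on `[0,L]` and `u(L) > θ'` (the unique zero of `F` in `(0,1)`)
is strictly increasing: `u' > 0` on `[0,L)`. -/
theorem limit_problem_solution_monotone
    (du L : ℝ) (hdu : 0 < du) (hL : 0 < L)
    (f : ℝ → ℝ) (θ θ' : ℝ) (hf : Bistable f θ)
    (hθ'mem : θ' ∈ Set.Ioo θ 1) (hθ'F : (∫ r in (0:ℝ)..θ', f r) = 0)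
    (p : ℝ) (hp : 0 < p) (hp1 : p < 1)
    (u u' u'' : ℝ → ℝ)
    (hd1 : ∀ x ∈ Set.Icc 0 L, HasDerivWithinAt u (u' x) (Set.Icc 0 L) x)
    (hd2 : ∀ x ∈ Set.Icc 0 L, HasDerivWithinAt u' (u'' x) (Set.Icc 0 L) x)
    (hd2c : ContinuousOn u'' (Set.Icc 0 L))
    (heq : ∀ x ∈ Set.Ioo (0:ℝ) L, -du * u'' x = f (u x))
    (hu0 : u 0 = p) (huL' : u' L = 0)
    (hbd : ∀ x ∈ Set.Icc (0:ℝ) L, 0 < u x ∧ u x < 1)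
    (huL : θ' < u L) :
    ∀ x ∈ Set.Ico (0:ℝ) L, 0 < u' x := by
  set F : ℝ → ℝ := fun s => ∫ r in (0:ℝ)..s, f r with hFdef
  have hθ0 : (0:ℝ) < θ := hf.θ_mem.1
  have hθ1 : θ < 1 := hf.θ_mem.2
  have hθ'0 : (0:ℝ) < θ' := hθ0.trans hθ'mem.1
  have hθ'1 : θ' < 1 := hθ'mem.2
  have hLmem : L ∈ Icc (0:ℝ) L := ⟨hL.le, le_rfl⟩
  have huL1 : u L < 1 := (hbd L hLmem).2
  have huL0 : 0 < u L := (hbd L hLmem).1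
  -- interval integrability of f on subintervals of [0,1]
  have hint : ∀ a ∈ Icc (0:ℝ) 1, ∀ b ∈ Icc (0:ℝ) 1,
      IntervalIntegrable f MeasureTheory.volume a b := fun a ha b hb =>
    (hf.cont.mono (uIcc_subset_Icc ha hb)).intervalIntegrable
  -- fundamental theorem of calculus for F
  have hFd : ∀ s ∈ Ioo (0:ℝ) 1, HasDerivAt F (f s) s := by
    intro s hs
    have hcs : ContinuousAt f s := hf.cont.continuousAt (Icc_mem_nhds hs.1 hs.2)
    have hmeas : StronglyMeasurableAtFilter f (nhds s) MeasureTheory.volume := by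
      refine ContinuousOn.stronglyMeasurableAtFilter isOpen_Ioo
        (hf.cont.mono Ioo_subset_Icc_self) s hs
    exact intervalIntegral.integral_hasDerivAt_right
      (hint 0 ⟨le_rfl, zero_le_one⟩ s ⟨hs.1.le, hs.2.le⟩) hmeas hcs
  -- F is strictly monotone on [θ', 1)
  have hFmono : StrictMonoOn F (Ico θ' 1) := by
    apply strictMonoOn_of_deriv_pos (convex_Ico θ' 1)
    · intro x hx
      exact ((hFd x ⟨hθ'0.trans_le hx.1, hx.2⟩).differentiableAt.continuousAt).continuousWithinAt
    · intro x hx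
      rw [interior_Ico] at hx
      rw [(hFd x ⟨hθ'0.trans hx.1, hx.2⟩).deriv]
      exact hf.pos x ⟨hθ'mem.1.trans hx.1, hx.2⟩
  -- F is nonpositive on (0, θ']
  have hFnonpos : ∀ s ∈ Ioc (0:ℝ) θ', F s ≤ 0 := by
    intro s hs
    rcases le_or_gt s θ with hsθ | hθs
    · -- F s = ∫₀ˢ f ≤ 0 since f ≤ 0 on [0, θ]
      have hneg : 0 ≤ ∫ r in (0:ℝ)..s, -f r := by
        apply intervalIntegral.integral_nonneg hs.1.le
        intro x hx
        rw [neg_nonneg]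
        rcases eq_or_lt_of_le hx.1 with h0 | h0
        · rw [← h0, hf.f0]
        · rcases eq_or_lt_of_le (hx.2.trans hsθ) with h1 | h1
          · rw [h1, hf.fθ]
          · exact (hf.neg x ⟨h0, h1⟩).le
      rw [intervalIntegral.integral_neg] at hneg
      simp only [hFdef]
      linarith
    · -- θ < s ≤ θ' : F θ' = F s + ∫ₛ^θ' f with the last integral ≥ 0
      have hsplit : (∫ r in (0:ℝ)..s, f r) + ∫ r in s..θ', f r = ∫ r in (0:ℝ)..θ', f r :=
        intervalIntegral.integral_add_adjacent_intervals
          (hint 0 ⟨le_rfl, zero_le_one⟩ s ⟨hs.1.le, hs.2.trans hθ'1.le⟩)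
          (hint s ⟨hs.1.le, hs.2.trans hθ'1.le⟩ θ' ⟨hθ'0.le, hθ'1.le⟩)
      have hpos' : 0 ≤ ∫ r in s..θ', f r := by
        apply intervalIntegral.integral_nonneg hs.2
        intro x hx
        exact (hf.pos x ⟨hθs.trans_le hx.1, lt_of_le_of_lt hx.2 hθ'1⟩).le
      have : F s + ∫ r in s..θ', f r = 0 := by rw [hFdef]; simpa [hθ'F] using hsplit
      linarith
  -- F (u L) > 0
  have hFL : 0 < F (u L) := by
    have h1 : F θ' < F (u L) :=
      hFmono ⟨le_rfl, hθ'1⟩ ⟨huL.le, huL1⟩ huL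
    have h2 : F θ' = 0 := hθ'F
    linarith
  -- injectivity: if F s = F (u L) for s ∈ (0,1), then s = u L
  have hkey : ∀ s ∈ Ioo (0:ℝ) 1, F s = F (u L) → s = u L := by
    intro s hs hFs
    rcases le_or_gt s θ' with hsθ' | hθ's
    · exact absurd hFs (by have := hFnonpos s ⟨hs.1, hsθ'⟩; linarith)
    · exact hFmono.injOn ⟨hθ's.le, hs.2⟩ ⟨huL.le, huL1⟩ hFs
  -- the energy E(x) = du/2 (u')² + F(u) is constant
  set E : ℝ → ℝ := fun x => du / 2 * (u' x * u' x) + F (u x) with hEdef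
  have hEd : ∀ x ∈ Icc (0:ℝ) L,
      HasDerivWithinAt E (du / 2 * (u'' x * u' x + u' x * u'' x) + f (u x) * u' x)
        (Icc 0 L) x := by
    intro x hx
    have hux : u x ∈ Ioo (0:ℝ) 1 := ⟨(hbd x hx).1, (hbd x hx).2⟩
    exact (((hd2 x hx).mul (hd2 x hx)).const_mul (du / 2)).add
      ((hFd (u x) hux).comp_hasDerivWithinAt x (hd1 x hx))
  have hEcont : ContinuousOn E (Icc 0 L) := fun x hx => (hEd x hx).continuousWithinAt
  have hEdiff : ∀ x ∈ Ioo (0:ℝ) L,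
      HasDerivAt E (du / 2 * (u'' x * u' x + u' x * u'' x) + f (u x) * u' x) x :=
    fun x hx => (hEd x ⟨hx.1.le, hx.2.le⟩).hasDerivAt (Icc_mem_nhds hx.1 hx.2)
  have hEderiv0 : ∀ x ∈ Ioo (0:ℝ) L, deriv E x = 0 := by
    intro x hx
    rw [(hEdiff x hx).deriv]
    linear_combination -(u' x) * heq x hx
  have hEdiffOn : DifferentiableOn ℝ E (interior (Icc (0:ℝ) L)) := by
    rw [interior_Icc]
    exact fun x hx => (hEdiff x hx).differentiableAt.differentiableWithinAt
  have hEmono : MonotoneOn E (Icc (0:ℝ) L) :=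
    monotoneOn_of_deriv_nonneg (convex_Icc 0 L) hEcont hEdiffOn
      (fun x hx => by rw [interior_Icc] at hx; rw [hEderiv0 x hx])
  have hEanti : AntitoneOn E (Icc (0:ℝ) L) :=
    antitoneOn_of_deriv_nonpos (convex_Icc 0 L) hEcont hEdiffOn
      (fun x hx => by rw [interior_Icc] at hx; rw [hEderiv0 x hx])
  have hEL : E L = F (u L) := by simp [hEdef, huL']
  have hE : ∀ x ∈ Icc (0:ℝ) L, du / 2 * (u' x * u' x) + F (u x) = F (u L) := by
    intro x hx
    have h1 : E x ≤ E L := hEmono hx hLmem hx.2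
    have h2 : E L ≤ E x := hEanti hx hLmem hx.2
    have : E x = F (u L) := le_antisymm (h1.trans_eq hEL) (hEL ▸ h2)
    simpa [hEdef] using this
  -- a critical point has value u L
  have hzero : ∀ x ∈ Icc (0:ℝ) L, u' x = 0 → u x = u L := by
    intro x hx h0
    refine hkey (u x) ⟨(hbd x hx).1, (hbd x hx).2⟩ ?_
    have := hE x hx
    rw [h0] at this
    linarith
  have hucont : ContinuousOn u (Icc 0 L) := fun x hx => (hd1 x hx).continuousWithinAt
  -- u' does not vanish on [0, L)
  have hne : ∀ x ∈ Ico (0:ℝ) L, u' x ≠ 0 := by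
    rintro x₀ ⟨hx00, hx0L⟩ h0
    have hx₀mem : x₀ ∈ Icc (0:ℝ) L := ⟨hx00, hx0L.le⟩
    have hux₀ : u x₀ = u L := hzero x₀ hx₀mem h0
    -- any interior local extremum on [x₀, L] has value u L
    have hloc : ∀ x₁ ∈ Ioo x₀ L, IsLocalExtr u x₁ → u x₁ = u L := by
      intro x₁ hx₁ hex
      have hx₁mem : x₁ ∈ Icc (0:ℝ) L := ⟨hx00.trans hx₁.1.le, hx₁.2.le⟩
      have hd : HasDerivAt u (u' x₁) x₁ :=
        (hd1 x₁ hx₁mem).hasDerivAt (Icc_mem_nhds (lt_of_le_of_lt hx00 hx₁.1) hx₁.2)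
      exact hzero x₁ hx₁mem (hex.hasDerivAt_eq_zero hd)
    have hsub : Icc x₀ L ⊆ Icc (0:ℝ) L := Icc_subset_Icc hx00 le_rfl
    have hucont' : ContinuousOn u (Icc x₀ L) := hucont.mono hsub
    have hKne : (Icc x₀ L).Nonempty := nonempty_Icc.2 hx0L.le
    obtain ⟨x₁, hx₁mem, hmax⟩ := isCompact_Icc.exists_isMaxOn hKne hucont'
    obtain ⟨x₂, hx₂mem, hmin⟩ := isCompact_Icc.exists_isMinOn hKne hucont'
    -- the max value is ≤ u L
    have hmax_le : u x₁ ≤ u L := by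
      by_contra h
      push_neg at h
      have hx₁Ioo : x₁ ∈ Ioo x₀ L := by
        refine ⟨lt_of_le_of_ne hx₁mem.1 ?_, lt_of_le_of_ne hx₁mem.2 ?_⟩
        · rintro rfl; rw [hux₀] at h; exact absurd h (lt_irrefl _)
        · rintro rfl; exact absurd h (lt_irrefl _)
      have hlm : IsLocalMax u x₁ := hmax.isLocalMax (Icc_mem_nhds hx₁Ioo.1 hx₁Ioo.2)
      have := hloc x₁ hx₁Ioo (Or.inr hlm)
      linarith
    -- the min value is ≥ u L
    have hmin_ge : u L ≤ u x₂ := by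
      by_contra h
      push_neg at h
      have hx₂Ioo : x₂ ∈ Ioo x₀ L := by
        refine ⟨lt_of_le_of_ne hx₂mem.1 ?_, lt_of_le_of_ne hx₂mem.2 ?_⟩
        · rintro rfl; rw [hux₀] at h; exact absurd h (lt_irrefl _)
        · rintro rfl; exact absurd h (lt_irrefl _)
      have hlm : IsLocalMin u x₂ := hmin.isLocalMin (Icc_mem_nhds hx₂Ioo.1 hx₂Ioo.2)
      have := hloc x₂ hx₂Ioo (Or.inl hlm)
      linarith
    -- hence u is constant on [x₀, L]
    have hconst : ∀ y ∈ Icc x₀ L, u y = u L :=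
      fun y hy => le_antisymm ((hmax hy).trans hmax_le) (hmin_ge.trans (hmin hy))
    -- derive a contradiction at the midpoint
    have hu'zero : ∀ y ∈ Ioo x₀ L, u' y = 0 := by
      intro y hy
      have hymem : y ∈ Icc (0:ℝ) L := ⟨hx00.trans hy.1.le, hy.2.le⟩
      have h1 : HasDerivAt u (u' y) y :=
        (hd1 y hymem).hasDerivAt (Icc_mem_nhds (lt_of_le_of_lt hx00 hy.1) hy.2)
      have h2 : HasDerivAt u 0 y := by
        refine (hasDerivAt_const y (u L)).congr_of_eventuallyEq ?_
        filter_upwards [Ioo_mem_nhds hy.1 hy.2] with w hw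
        exact hconst w (Ioo_subset_Icc_self hw)
      exact h1.unique h2
    set z := (x₀ + L) / 2 with hzdef
    have hzIoo : z ∈ Ioo x₀ L := ⟨by simp [hzdef]; linarith, by simp [hzdef]; linarith⟩
    have hzmem : z ∈ Icc (0:ℝ) L := ⟨hx00.trans hzIoo.1.le, hzIoo.2.le⟩
    have hu''z : u'' z = 0 := by
      have h1 : HasDerivAt u' (u'' z) z :=
        (hd2 z hzmem).hasDerivAt (Icc_mem_nhds (lt_of_le_of_lt hx00 hzIoo.1) hzIoo.2)
      have h2 : HasDerivAt u' 0 z := by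
        refine (hasDerivAt_const z (0:ℝ)).congr_of_eventuallyEq ?_
        filter_upwards [Ioo_mem_nhds hzIoo.1 hzIoo.2] with w hw
        exact hu'zero w hw
      exact h1.unique h2
    have hzIoo' : z ∈ Ioo (0:ℝ) L := ⟨lt_of_le_of_lt hx00 hzIoo.1, hzIoo.2⟩
    have heqz := heq z hzIoo'
    rw [hu''z, hconst z (Ioo_subset_Icc_self hzIoo)] at heqz
    have hfpos : 0 < f (u L) := hf.pos (u L) ⟨hθ'mem.1.trans huL, huL1⟩
    simp at heqz
    linarith
  -- finally, the sign: u' > 0 on [0, L)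
  intro x hx
  rcases (hne x hx).lt_or_gt with hneg | hpos
  · exfalso
    have hu'cont : ContinuousOn u' (Icc 0 L) := fun y hy => (hd2 y hy).continuousWithinAt
    -- u' is negative on all of [0, L)
    have hall : ∀ y ∈ Ico (0:ℝ) L, u' y < 0 := by
      intro y hy
      rcases (hne y hy).lt_or_gt with h | h
      · exact h
      · exfalso
        have hsub : uIcc x y ⊆ Icc (0:ℝ) L := by
          apply uIcc_subset_Icc ⟨hx.1, hx.2.le⟩ ⟨hy.1, hy.2.le⟩
        have hIv : uIcc (u' x) (u' y) ⊆ u' '' uIcc x y :=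
          intermediate_value_uIcc (hu'cont.mono hsub)
        have h0mem : (0:ℝ) ∈ uIcc (u' x) (u' y) := by
          rw [mem_uIcc]; left; exact ⟨hneg.le, h.le⟩
        obtain ⟨c, hc, hc0⟩ := hIv h0mem
        have hcIco : c ∈ Ico (0:ℝ) L := by
          have := hc
          rw [mem_uIcc] at this
          rcases this with h' | h'
          · exact ⟨hx.1.trans h'.1, lt_of_le_of_lt h'.2 hy.2⟩
          · exact ⟨hy.1.trans h'.1, lt_of_le_of_lt h'.2 hx.2⟩
        exact hne c hcIco hc0
    -- hence u is antitone, so u 0 ≥ u L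
    have hudiffOn : DifferentiableOn ℝ u (interior (Icc (0:ℝ) L)) := by
      rw [interior_Icc]
      exact fun y hy =>
        ((hd1 y ⟨hy.1.le, hy.2.le⟩).hasDerivAt
          (Icc_mem_nhds hy.1 hy.2)).differentiableAt.differentiableWithinAt
    have hanti : AntitoneOn u (Icc (0:ℝ) L) := by
      apply antitoneOn_of_deriv_nonpos (convex_Icc 0 L) hucont hudiffOn
      intro y hy
      rw [interior_Icc] at hy
      rw [((hd1 y ⟨hy.1.le, hy.2.le⟩).hasDerivAt (Icc_mem_nhds hy.1 hy.2)).deriv]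
      exact (hall y ⟨hy.1.le, hy.2⟩).le
    have h0L : u L ≤ u 0 := hanti ⟨le_rfl, hL.le⟩ hLmem hL.le
    -- energy at 0 gives F(u 0) < F(u L), monotonicity gives the reverse
    have h0mem : (0:ℝ) ∈ Icc (0:ℝ) L := ⟨le_rfl, hL.le⟩
    have hE0 := hE 0 h0mem
    have hu'0 : u' 0 < 0 := hall 0 ⟨le_rfl, hL⟩
    have hsq : 0 < u' 0 * u' 0 := mul_pos_of_neg_of_neg hu'0 hu'0
    have hFle : F (u L) ≤ F (u 0) := by
      rcases eq_or_lt_of_le h0L with h | h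
      · rw [h]
      · exact (hFmono ⟨huL.le, huL1⟩ ⟨(huL.trans h).le, (hbd 0 h0mem).2⟩ h).le
    nlinarith
  · exact hpos
end

section
/- Let f : ℝ → ℝ be continuous, let d_u, d_v, α, β, γ > 0 and 0 < a < L, and let (u,v) be a solution of the 1D stationary predator–prey system (S): u ∈ C¹([0,L]) with u C² on (0,a) and on (a,L), v ∈ C²([0,a]), −d_u u'' = f(u) − β u v on (0,a), −d_u u'' = f(u) on (a,L), −d_v v'' = −γ v + α u v on (0,a), u'(0) = u'(L) = 0, v'(0) = v'(a) = 0. Then the total predator population satisfies the identity ∫₀ᵃ v(x) dx = (α/(β γ)) ∫₀^L f(u(x)) dx. In particular, if 0 ≤ u ≤ 1 on [0,L] then ∫₀ᵃ v(x) dx ≤ (α L/(β γ)) · sup_{s ∈ [0,1]} |f(s)|, so the total predator population remains bounded as a → 0. -/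
open Set

/-- `(u,v)` (with derivatives `u'`, `v'`) solves the 1D stationary predator–prey
system (S) on prey domain `(0,L)` with predation zone `(0,a)`:
`−d_u u'' = f(u) − β u v` on `(0,a)`, `−d_u u'' = f(u)` on `(a,L)`,
`−d_v v'' = −γ v + α u v` on `(0,a)`, with Neumann conditions
`u'(0) = u'(L) = 0`, `v'(0) = v'(a) = 0`. -/
def StatSol (du dv α β γ : ℝ) (f : ℝ → ℝ) (a L : ℝ) (u u' v v' : ℝ → ℝ) : Prop :=
  (∀ x ∈ Set.Icc 0 L, HasDerivWithinAt u (u' x) (Set.Icc 0 L) x) ∧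
  ContinuousOn u' (Set.Icc 0 L) ∧
  (∀ x ∈ Set.Ioo 0 a, HasDerivAt u' (-(f (u x) - β * u x * v x) / du) x) ∧
  (∀ x ∈ Set.Ioo a L, HasDerivAt u' (-(f (u x)) / du) x) ∧
  (∀ x ∈ Set.Icc 0 a, HasDerivWithinAt v (v' x) (Set.Icc 0 a) x) ∧
  (∀ x ∈ Set.Icc 0 a, HasDerivWithinAt v' ((γ * v x - α * u x * v x) / dv) (Set.Icc 0 a) x) ∧
  u' 0 = 0 ∧ u' L = 0 ∧ v' 0 = 0 ∧ v' a = 0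

/-- **Identity (4.7) for the total predator population.**
For any solution of the 1D stationary system (S),
`∫₀ᵃ v = (α/(βγ)) ∫₀^L f(u)`; in particular, if `0 ≤ u ≤ 1` then
`∫₀ᵃ v ≤ (αL/(βγ)) sup_{[0,1]} |f|`, so the total predator population
remains bounded as `a → 0`. -/
theorem total_predator_population_identity
    (f : ℝ → ℝ) (hf : Continuous f)
    (du dv α β γ : ℝ) (hdu : 0 < du) (hdv : 0 < dv) (hα : 0 < α) (hβ : 0 < β)
    (hγ : 0 < γ)
    (a L : ℝ) (ha : 0 < a) (haL : a < L)
    (u u' v v' : ℝ → ℝ)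
    (hsol : StatSol du dv α β γ f a L u u' v v') :
    (∫ x in (0:ℝ)..a, v x) = α / (β * γ) * ∫ x in (0:ℝ)..L, f (u x) ∧
    ((∀ x ∈ Set.Icc (0:ℝ) L, u x ∈ Set.Icc (0:ℝ) 1) →
      (∫ x in (0:ℝ)..a, v x) ≤ α * L / (β * γ) * ⨆ s : Set.Icc (0:ℝ) 1, |f s|) := by

  obtain ⟨hu, hu'c, hu''1, hu''2, hv, hv'', hu'0, hu'L, hv'0, hv'a⟩ := hsol
  have haL0 : (0:ℝ) ≤ L := le_of_lt (lt_trans ha haL)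
  have ha0 : (0:ℝ) ≤ a := le_of_lt ha
  have hsub : Set.Icc (0:ℝ) a ⊆ Set.Icc 0 L := Set.Icc_subset_Icc le_rfl haL.le
  have hsub2 : Set.Icc a L ⊆ Set.Icc 0 L := Set.Icc_subset_Icc ha0 le_rfl
  -- continuity
  have hu_c : ContinuousOn u (Set.Icc 0 L) := fun x hx => (hu x hx).continuousWithinAt
  have hv_c : ContinuousOn v (Set.Icc 0 a) := fun x hx => (hv x hx).continuousWithinAt
  have hv'_c : ContinuousOn v' (Set.Icc 0 a) := fun x hx => (hv'' x hx).continuousWithinAt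
  -- integrability facts
  have hint_v : IntervalIntegrable v MeasureTheory.volume 0 a := by
    apply ContinuousOn.intervalIntegrable; rwa [Set.uIcc_of_le ha0]
  have hint_uv : IntervalIntegrable (fun x => u x * v x) MeasureTheory.volume 0 a := by
    apply ContinuousOn.intervalIntegrable; rw [Set.uIcc_of_le ha0]
    exact (hu_c.mono hsub).mul hv_c
  have hint_fu1 : IntervalIntegrable (fun x => f (u x)) MeasureTheory.volume 0 a := by
    apply ContinuousOn.intervalIntegrable; rw [Set.uIcc_of_le ha0]
    exact hf.comp_continuousOn (hu_c.mono hsub)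
  have hint_fu2 : IntervalIntegrable (fun x => f (u x)) MeasureTheory.volume a L := by
    apply ContinuousOn.intervalIntegrable; rw [Set.uIcc_of_le haL.le]
    exact hf.comp_continuousOn (hu_c.mono hsub2)
  have hint_fuL : IntervalIntegrable (fun x => f (u x)) MeasureTheory.volume 0 L := by
    apply ContinuousOn.intervalIntegrable; rw [Set.uIcc_of_le haL0]
    exact hf.comp_continuousOn hu_c
  -- FTC for v'
  have I1 : (∫ x in (0:ℝ)..a, (γ * v x - α * u x * v x) / dv) = v' a - v' 0 := by
    apply intervalIntegral.integral_eq_sub_of_hasDeriv_right_of_le ha0 hv'_c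
    · intro x hx
      exact ((hv'' x (Set.Ioo_subset_Icc_self hx)).hasDerivAt
        (Icc_mem_nhds hx.1 hx.2)).hasDerivWithinAt
    · apply ContinuousOn.intervalIntegrable; rw [Set.uIcc_of_le ha0]
      exact ((continuousOn_const.mul hv_c).sub
        ((continuousOn_const.mul (hu_c.mono hsub)).mul hv_c)).div_const dv
  rw [hv'a, hv'0, sub_zero] at I1
  have E1 : γ * (∫ x in (0:ℝ)..a, v x) = α * ∫ x in (0:ℝ)..a, u x * v x := by
    rw [intervalIntegral.integral_div] at I1
    have h0 : (∫ x in (0:ℝ)..a, (γ * v x - α * u x * v x)) = 0 := by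
      exact (div_eq_zero_iff.mp I1).resolve_right (ne_of_gt hdv)
    rw [intervalIntegral.integral_sub (hint_v.const_mul γ) (by
      simpa [mul_assoc] using hint_uv.const_mul α)] at h0
    rw [intervalIntegral.integral_const_mul] at h0
    have : (∫ x in (0:ℝ)..a, α * u x * v x) = α * ∫ x in (0:ℝ)..a, u x * v x := by
      simp_rw [mul_assoc]; rw [intervalIntegral.integral_const_mul]
    rw [this] at h0; linarith
  -- FTC for u' on [0,a]
  have I2 : (∫ x in (0:ℝ)..a, -(f (u x) - β * u x * v x) / du) = u' a - u' 0 := by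
    apply intervalIntegral.integral_eq_sub_of_hasDeriv_right_of_le ha0 (hu'c.mono hsub)
    · intro x hx; exact (hu''1 x hx).hasDerivWithinAt
    · apply ContinuousOn.intervalIntegrable; rw [Set.uIcc_of_le ha0]
      exact (((hf.comp_continuousOn (hu_c.mono hsub)).sub
        ((continuousOn_const.mul (hu_c.mono hsub)).mul hv_c)).neg).div_const du
  -- FTC for u' on [a,L]
  have I3 : (∫ x in a..L, -(f (u x)) / du) = u' L - u' a := by
    apply intervalIntegral.integral_eq_sub_of_hasDeriv_right_of_le haL.le (hu'c.mono hsub2)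
    · intro x hx; exact (hu''2 x hx).hasDerivWithinAt
    · apply ContinuousOn.intervalIntegrable; rw [Set.uIcc_of_le haL.le]
      exact ((hf.comp_continuousOn (hu_c.mono hsub2)).neg).div_const du
  rw [hu'0, sub_zero] at I2
  rw [hu'L, zero_sub] at I3
  have E2 : (∫ x in (0:ℝ)..L, f (u x)) = β * ∫ x in (0:ℝ)..a, u x * v x := by
    have hsum : (∫ x in (0:ℝ)..a, -(f (u x) - β * u x * v x) / du)
        + (∫ x in a..L, -(f (u x)) / du) = 0 := by rw [I2, I3]; ring
    rw [intervalIntegral.integral_div, intervalIntegral.integral_div] at hsum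
    have hsum2 : (∫ x in (0:ℝ)..a, -(f (u x) - β * u x * v x))
        + (∫ x in a..L, -(f (u x))) = 0 := by
      rw [← add_div] at hsum
      exact (div_eq_zero_iff.mp hsum).resolve_right (ne_of_gt hdu)
    rw [intervalIntegral.integral_neg, intervalIntegral.integral_neg,
      intervalIntegral.integral_sub hint_fu1 (by
        simpa [mul_assoc] using hint_uv.const_mul β)] at hsum2
    have hβuv : (∫ x in (0:ℝ)..a, β * u x * v x) = β * ∫ x in (0:ℝ)..a, u x * v x := by
      simp_rw [mul_assoc]; rw [intervalIntegral.integral_const_mul]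
    rw [hβuv] at hsum2
    rw [← intervalIntegral.integral_add_adjacent_intervals hint_fu1 hint_fu2]
    linarith
  -- main identity
  have hmain : (∫ x in (0:ℝ)..a, v x) = α / (β * γ) * ∫ x in (0:ℝ)..L, f (u x) := by
    rw [E2]
    field_simp
    linear_combination E1
  refine ⟨hmain, fun hu01 => ?_⟩
  -- the bound
  set M : ℝ := ⨆ s : Set.Icc (0:ℝ) 1, |f s| with hM
  have hbdd : BddAbove (Set.range fun s : Set.Icc (0:ℝ) 1 => |f s|) := by
    have h := (isCompact_Icc (a := (0:ℝ)) (b := 1)).bddAbove_image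
      (f := fun s => |f s|) hf.abs.continuousOn
    rwa [Set.image_eq_range] at h
  have hM0 : 0 ≤ M :=
    le_trans (abs_nonneg (f 0)) (le_ciSup hbdd ⟨0, by norm_num⟩)
  have hle : ∀ x ∈ Set.Icc (0:ℝ) L, f (u x) ≤ M := fun x hx =>
    le_trans (le_abs_self _) (le_ciSup hbdd ⟨u x, hu01 x hx⟩)
  have hineq : (∫ x in (0:ℝ)..L, f (u x)) ≤ L * M := by
    have := intervalIntegral.integral_mono_on haL0 hint_fuL
      (intervalIntegrable_const (c := M)) hle
    simpa using this
  rw [hmain]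
  have hpos : 0 < α / (β * γ) := div_pos hα (mul_pos hβ hγ)
  calc α / (β * γ) * ∫ x in (0:ℝ)..L, f (u x) ≤ α / (β * γ) * (L * M) :=
        mul_le_mul_of_nonneg_left hineq hpos.le
    _ = α * L / (β * γ) * M := by ring
end

section
/- Let d_u > 0, L > 0, and let f be C¹ on an interval containing the range of w₁. Suppose w₁ : [0,L] → ℝ is a C³ solution of −d_u w₁'' = f(w₁) on [0,L] with w₁'(L) = 0, and w₂ : [0,L] → ℝ is a C² solution of d_u w₂'' + f'(w₁) w₂ = (2/L) f(w₁) on [0,L] with w₂'(L) = 0 and w₂(0) = (1/3) w₁'(0). Define z(x) = w₂(x) + (x/L − 1/3) w₁'(x). Then z satisfies the homogeneous linearized equation d_u z'' + f'(w₁) z = 0 on [0,L], together with z(0) = 0 and z'(L) = −(2/3) f(w₁(L)) / d_u. -/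
open Set

/-- **Auxiliary-function computation in the proof of Theorem 4.4.**
With `w₁` a C³ solution of `−d_u w₁'' = f(w₁)`, `w₁'(L) = 0`, and `w₂` a C²
solution of `d_u w₂'' + f'(w₁) w₂ = (2/L) f(w₁)` with `w₂'(L) = 0`,
`w₂(0) = (1/3) w₁'(0)`, the function `z(x) = w₂(x) + (x/L − 1/3) w₁'(x)`
satisfies the homogeneous linearized equation `d_u z'' + f'(w₁) z = 0` on
`[0,L]`, with `z(0) = 0` and `z'(L) = −(2/3) f(w₁(L)) / d_u`. -/
theorem auxiliary_function_z
    (du L : ℝ) (hdu : 0 < du) (hL : 0 < L)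
    (f f' : ℝ → ℝ)
    (w₁ w₁' w₁'' w₁''' w₂ w₂' w₂'' : ℝ → ℝ)
    -- `f` is C¹ on an interval containing the range of `w₁`:
    (hf : ∀ x ∈ Set.Icc (0:ℝ) L, HasDerivAt f (f' (w₁ x)) (w₁ x))
    (hf'c : ContinuousOn (fun x => f' (w₁ x)) (Set.Icc 0 L))
    -- `w₁` is a C³ solution of `−d_u w₁'' = f(w₁)` on `[0,L]` with `w₁'(L) = 0`:
    (hw₁d1 : ∀ x ∈ Set.Icc 0 L, HasDerivWithinAt w₁ (w₁' x) (Set.Icc 0 L) x)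
    (hw₁d2 : ∀ x ∈ Set.Icc 0 L, HasDerivWithinAt w₁' (w₁'' x) (Set.Icc 0 L) x)
    (hw₁d3 : ∀ x ∈ Set.Icc 0 L, HasDerivWithinAt w₁'' (w₁''' x) (Set.Icc 0 L) x)
    (hw₁d3c : ContinuousOn w₁''' (Set.Icc 0 L))
    (hw₁eq : ∀ x ∈ Set.Icc (0:ℝ) L, -du * w₁'' x = f (w₁ x))
    (hw₁L : w₁' L = 0)
    -- `w₂` is a C² solution of the inhomogeneous linearized equation:
    (hw₂d1 : ∀ x ∈ Set.Icc 0 L, HasDerivWithinAt w₂ (w₂' x) (Set.Icc 0 L) x)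
    (hw₂d2 : ∀ x ∈ Set.Icc 0 L, HasDerivWithinAt w₂' (w₂'' x) (Set.Icc 0 L) x)
    (hw₂d2c : ContinuousOn w₂'' (Set.Icc 0 L))
    (hw₂eq : ∀ x ∈ Set.Icc (0:ℝ) L,
      du * w₂'' x + f' (w₁ x) * w₂ x = 2 / L * f (w₁ x))
    (hw₂L : w₂' L = 0) (hw₂0 : w₂ 0 = w₁' 0 / 3) :
    ∃ z' z'' : ℝ → ℝ,
      (∀ x ∈ Set.Icc (0:ℝ) L,
        HasDerivWithinAt (fun y => w₂ y + (y / L - 1/3) * w₁' y) (z' x)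
          (Set.Icc 0 L) x) ∧
      (∀ x ∈ Set.Icc (0:ℝ) L, HasDerivWithinAt z' (z'' x) (Set.Icc 0 L) x) ∧
      (∀ x ∈ Set.Icc (0:ℝ) L,
        du * z'' x + f' (w₁ x) * (w₂ x + (x / L - 1/3) * w₁' x) = 0) ∧
      (w₂ 0 + (0 / L - 1/3) * w₁' 0 = 0) ∧
      z' L = -(2/3) * f (w₁ L) / du := by
  have hu : UniqueDiffOn ℝ (Set.Icc (0:ℝ) L) := uniqueDiffOn_Icc hL
  have hLne : L ≠ 0 := hL.ne'
  -- third-derivative identity: -du * w₁''' x = f' (w₁ x) * w₁' x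
  have hthird : ∀ x ∈ Set.Icc (0:ℝ) L, -du * w₁''' x = f' (w₁ x) * w₁' x := by
    intro x hx
    have h1 : HasDerivWithinAt (fun y => -du * w₁'' y - f (w₁ y))
        (-du * w₁''' x - f' (w₁ x) * w₁' x) (Set.Icc 0 L) x :=
      ((hw₁d3 x hx).const_mul (-du)).sub ((hf x hx).comp_hasDerivWithinAt x (hw₁d1 x hx))
    have h2 : HasDerivWithinAt (fun y => -du * w₁'' y - f (w₁ y)) 0 (Set.Icc 0 L) x := by
      have : HasDerivWithinAt (fun _ : ℝ => (0:ℝ)) 0 (Set.Icc (0:ℝ) L) x :=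
        (hasDerivWithinAt_const _ _ 0)
      exact this.congr (fun y hy => by rw [hw₁eq y hy]; ring) (by rw [hw₁eq x hx]; ring)
    have := (hu x hx).eq_deriv _ h1 h2
    linarith
  refine ⟨fun x => w₂' x + (1/L) * w₁' x + (x / L - 1/3) * w₁'' x,
          fun x => w₂'' x + (2/L) * w₁'' x + (x / L - 1/3) * w₁''' x, ?_, ?_, ?_, ?_, ?_⟩
  · intro x hx
    have hc : HasDerivWithinAt (fun y : ℝ => y / L - 1/3) (1/L) (Set.Icc 0 L) x := by
      simpa using ((hasDerivWithinAt_id x (Set.Icc (0:ℝ) L)).div_const L).sub_const (1/3)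
    have h : HasDerivWithinAt (fun y => w₂ y + (y / L - 1/3) * w₁' y)
        (w₂' x + (1/L * w₁' x + (x / L - 1/3) * w₁'' x)) (Set.Icc 0 L) x :=
      (hw₂d1 x hx).add (hc.mul (hw₁d2 x hx))
    convert h using 1; ring
  · intro x hx
    have hc : HasDerivWithinAt (fun y : ℝ => y / L - 1/3) (1/L) (Set.Icc 0 L) x := by
      simpa using ((hasDerivWithinAt_id x (Set.Icc (0:ℝ) L)).div_const L).sub_const (1/3)
    have h : HasDerivWithinAt (fun y => w₂' y + 1/L * w₁' y + (y / L - 1/3) * w₁'' y)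
        (w₂'' x + 1/L * w₁'' x + (1/L * w₁'' x + (x / L - 1/3) * w₁''' x)) (Set.Icc 0 L) x :=
      ((hw₂d2 x hx).add ((hw₁d2 x hx).const_mul (1/L))).add
      (hc.mul (hw₁d3 x hx))
    convert h using 1; ring
  · intro x hx
    have h1 := hw₁eq x hx
    have h2 := hw₂eq x hx
    have h3 := hthird x hx
    linear_combination h2 - 2/L * h1 - (x / L - 1/3) * h3
  · rw [hw₂0]; ring
  · have hLL : -du * w₁'' L = f (w₁ L) := hw₁eq L ⟨le_of_lt hL, le_refl L⟩
    show w₂' L + 1/L * w₁' L + (L / L - 1/3) * w₁'' L = -(2/3) * f (w₁ L) / du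
    rw [hw₂L, hw₁L]
    field_simp
    linear_combination (-2 * L) * hLL
end
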